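/- If A₁, A₂, A₃ satisfy the color Heisenberg relations and A₃² = α²·1 for some nonzero scalar α, then A₁ and (α⁻¹A₂)(α⁻¹A₃) satisfy the Heisenberg canonical commutation relation: A₁·(α⁻²A₂A₃) − (α⁻²A₂A₃)·A₁ = 1. -/

import Mathlib

theorem colorHeis_to_Heisenberg {R : Type*} [Ring R] [Algebra ℂ R]
    (A₁ A₂ A₃ : R) (α : ℂ) (hα : α ≠ 0)
    (h1 : A₁ * A₂ + A₂ * A₁ = A₃)
    (h2 : A₁ * A₃ + A₃ * A₁ = 0)
    (h3 : A₂ * A₃ + A₃ * A₂ = 0)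
    (hsq : A₃ ^ 2 = (α ^ 2) • (1 : R)) :
    A₁ * ((α⁻¹ • A₂) * (α⁻¹ • A₃)) - ((α⁻¹ • A₂) * (α⁻¹ • A₃)) * A₁ = 1 := by
  have e2 : A₃ * A₁ = -(A₁ * A₃) := by
    rw [eq_neg_iff_add_eq_zero, add_comm]; exact h2
  have key : A₁ * (A₂ * A₃) - (A₂ * A₃) * A₁ = (α ^ 2) • (1 : R) := by
    calc A₁ * (A₂ * A₃) - (A₂ * A₃) * A₁
        = A₁ * A₂ * A₃ + A₂ * A₁ * A₃ := by
          rw [mul_assoc A₂ A₃ A₁, e2, mul_neg, ← mul_assoc, ← mul_assoc]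
          rw [sub_neg_eq_add]
      _ = (A₁ * A₂ + A₂ * A₁) * A₃ := by rw [add_mul]
      _ = A₃ ^ 2 := by rw [h1, sq]
      _ = (α ^ 2) • (1 : R) := hsq
  rw [smul_mul_smul_comm, mul_smul_comm, smul_mul_assoc, ← smul_sub, key,
    smul_smul]
  have : α⁻¹ * α⁻¹ * α ^ 2 = 1 := by field_simp
  rw [this, one_smul]
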